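/- Given a finite set D of non-negative integers containing 0, there exists a countable D-ultrametric space CU(D) such that every countable D-ultrametric space X admits an isometric embedding into CU(D). -/

import Mathlib

/-- The distance of a metric space is an ultrametric. -/
def IsUltra (X : Type*) [MetricSpace X] : Prop :=
  ∀ x y z : X, dist x z ≤ max (dist x y) (dist y z)

/-- All distances of the metric space belong to the set `D` of natural numbers. -/
def DistIn (X : Type*) [MetricSpace X] (D : Finset ℕ) : Prop :=
  ∀ x y : X, ∃ a ∈ D, dist x y = (a : ℝ)

namespace UnivUltra

variable (D : Finset ℕ)

/-- The nonzero distances. -/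
abbrev E : Finset ℕ := D.erase 0

/-- The universal space: functions from nonzero distances to ℕ. -/
def C : Type := {a // a ∈ E D} → ℕ

instance : Countable (C D) :=
  show Countable ({a // a ∈ E D} → ℕ) from inferInstance

instance (x y : C D) (a : {a // a ∈ E D}) : Decidable (x a = y a) := Nat.decEq (x a) (y a)

/-- Natural-valued distance: largest nonzero distance index at which the two
functions differ. -/
def nd (x y : C D) : ℕ :=
  (Finset.univ.filter (fun a : {a // a ∈ E D} => x a ≠ y a)).sup (fun a => (a : ℕ))

variable {D}

lemma nd_self (x : C D) : nd D x x = 0 := by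
  unfold nd
  have : (Finset.univ.filter (fun a : {a // a ∈ E D} => x a ≠ x a)) = ∅ := by
    simp
  rw [this, Finset.sup_empty]
  rfl

lemma nd_comm (x y : C D) : nd D x y = nd D y x := by
  unfold nd
  congr 1
  ext a
  simp [ne_comm]

lemma eq_of_nd_eq_zero {x y : C D} (h : nd D x y = 0) : x = y := by
  funext a
  by_contra hne
  have hmem : a ∈ Finset.univ.filter (fun a : {a // a ∈ E D} => x a ≠ y a) := by
    simp [hne]
  have := Finset.le_sup (f := fun a : {a // a ∈ E D} => (a : ℕ)) hmem
  rw [show (Finset.univ.filter (fun a : {a // a ∈ E D} => x a ≠ y a)).sup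
      (fun a => (a : ℕ)) = nd D x y from rfl, h, Nat.le_zero] at this
  exact (Finset.mem_erase.mp a.2).1 this

lemma nd_ultra (x y z : C D) : nd D x z ≤ max (nd D x y) (nd D y z) := by
  unfold nd
  apply Finset.sup_le
  intro a ha
  have hxz : x a ≠ z a := (Finset.mem_filter.mp ha).2
  by_cases hxy : x a = y a
  · have hyz : y a ≠ z a := fun h => hxz (hxy.trans h)
    exact le_max_of_le_right (Finset.le_sup (by simp [hyz]))
  · exact le_max_of_le_left (Finset.le_sup (by simp [hxy]))

lemma nd_mem (h0 : 0 ∈ D) (x y : C D) : nd D x y ∈ D := by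
  rcases (Finset.univ.filter (fun a : {a // a ∈ E D} => x a ≠ y a)).eq_empty_or_nonempty
    with h | h
  · unfold nd; rw [h, Finset.sup_empty]; exact h0
  · obtain ⟨b, _, hb⟩ := Finset.exists_mem_eq_sup _ h (fun a : {a // a ∈ E D} => (a : ℕ))
    unfold nd
    rw [hb]
    exact (Finset.mem_erase.mp b.2).2

noncomputable instance : MetricSpace (C D) where
  dist x y := (nd D x y : ℝ)
  dist_self x := by simp [nd_self]
  dist_comm x y := by
    show (nd D x y : ℝ) = (nd D y x : ℝ)
    rw [nd_comm]
  dist_triangle x y z := by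
    show (nd D x z : ℝ) ≤ (nd D x y : ℝ) + (nd D y z : ℝ)
    have h := nd_ultra x y z
    have : (nd D x z : ℝ) ≤ max ((nd D x y : ℕ) : ℝ) ((nd D y z : ℕ) : ℝ) := by
      rw [← Nat.cast_max]; exact_mod_cast h
    have h2 : (max (nd D x y : ℝ) (nd D y z)) ≤ (nd D x y : ℝ) + (nd D y z : ℝ) :=
      max_le (le_add_of_nonneg_right (by positivity)) (le_add_of_nonneg_left (by positivity))
    exact this.trans h2
  eq_of_dist_eq_zero := by
    intro x y h
    have h' : (nd D x y : ℝ) = 0 := h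
    exact eq_of_nd_eq_zero (by exact_mod_cast h')

lemma dist_eq (x y : C D) : dist x y = (nd D x y : ℝ) := rfl

end UnivUltra

/-- Proposition 4.5: given a finite set `D` of non-negative integers containing `0`, there is
a countable `D`-ultrametric space `CU(D)` such that every countable `D`-ultrametric space
isometrically embeds into it. -/
theorem exists_countable_universal_ultrametric (D : Finset ℕ) (h0 : 0 ∈ D) :
    ∃ (C : Type) (_ : MetricSpace C), Countable C ∧ IsUltra C ∧ DistIn C D ∧
      ∀ (X : Type u) (_ : MetricSpace X), IsUltra X → DistIn X D →
        Countable X → ∃ f : X → C, Isometry f := by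
  refine ⟨UnivUltra.C D, inferInstance, inferInstance, ?_, ?_, ?_⟩
  · intro x y z
    rw [UnivUltra.dist_eq, UnivUltra.dist_eq, UnivUltra.dist_eq]
    exact_mod_cast UnivUltra.nd_ultra x y z
  · intro x y
    exact ⟨UnivUltra.nd D x y, UnivUltra.nd_mem h0 x y, rfl⟩
  · intro X _ hU hD _
    -- for each nonzero distance a, the relation `dist x y < a` is an equivalence
    have hpos : ∀ a : {a // a ∈ UnivUltra.E D}, (0 : ℝ) < (a : ℕ) := by
      intro a
      exact_mod_cast Nat.pos_of_ne_zero (Finset.mem_erase.mp a.2).1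
    let s : ∀ _ : {a // a ∈ UnivUltra.E D}, Setoid X := fun a =>
      ⟨fun x y => dist x y < (a : ℕ),
        ⟨fun x => by simpa using hpos a,
         fun {x y} h => by rwa [dist_comm],
         fun {x y z} h1 h2 => lt_of_le_of_lt ((hU x y z).trans (le_refl _)) (max_lt h1 h2)⟩⟩
    have hg : ∀ a : {a // a ∈ UnivUltra.E D},
        ∃ g : Quotient (s a) → ℕ, Function.Injective g := fun a =>
      exists_injective_nat _
    choose g hg using hg
    refine ⟨fun x a => g a (Quotient.mk (s a) x), Isometry.of_dist_eq ?_⟩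
    intro x y
    obtain ⟨a, haD, hdxy⟩ := hD x y
    show (UnivUltra.nd D (fun a => g a (Quotient.mk (s a) x)) (fun a => g a (Quotient.mk (s a) y)) : ℝ) = dist x y
    rw [hdxy]
    norm_cast
    by_cases ha : a = 0
    · subst ha
      have hxy : x = y := by
        have : dist x y = 0 := by simpa using hdxy
        exact eq_of_dist_eq_zero this
      subst hxy
      simpa using UnivUltra.nd_self (D := D) _
    · have haE : a ∈ UnivUltra.E D := Finset.mem_erase.mpr ⟨ha, haD⟩
      apply le_antisymm
      · apply Finset.sup_le
        intro b hb
        have hbne : g b (Quotient.mk (s b) x) ≠ g b (Quotient.mk (s b) y) :=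
          (Finset.mem_filter.mp hb).2
        have hq : Quotient.mk (s b) x ≠ Quotient.mk (s b) y := fun h => hbne (by rw [h])
        have hnr : ¬ dist x y < ((b : ℕ) : ℝ) := fun h => hq (Quotient.sound h)
        have : ((b : ℕ) : ℝ) ≤ dist x y := not_lt.mp hnr
        rw [hdxy] at this
        exact_mod_cast this
      · have hq : Quotient.mk (s ⟨a, haE⟩) x ≠ Quotient.mk (s ⟨a, haE⟩) y := by
          intro h
          have := Quotient.exact h
          change dist x y < (a : ℝ) at this
          rw [hdxy] at this
          exact lt_irrefl _ this
        have hmem : (⟨a, haE⟩ : {a // a ∈ UnivUltra.E D}) ∈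
            Finset.univ.filter (fun b : {a // a ∈ UnivUltra.E D} =>
              g b (Quotient.mk (s b) x) ≠ g b (Quotient.mk (s b) y)) := by
          simp only [Finset.mem_filter, Finset.mem_univ, true_and]
          exact fun h => hq (hg _ h)
        exact Finset.le_sup (f := fun b : {a // a ∈ UnivUltra.E D} => (b : ℕ)) hmem
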